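/- Let $F$ be a finite group acting by automorphisms on a finite group $G$, and let $m$ and $k$ be coprime natural numbers. Then for all $y \in F$ and $g \in G$: $z_{m,k}(1,y) = z_{m,1}(1,y)$ and $z_{m,k}(g,1) = z_{m,1}(g,1)$. In the second case, if $l$ satisfies $kl \equiv 1 \pmod m$, the maps $x \mapsto x^k$ and $x \mapsto x^l$ are mutually inverse bijections between $G_{m,1}(g,1)$ and $G_{m,k}(g,1)$. -/
import Mathlib


/-- For a group `F` acting by automorphisms on a group `G`, coprime `m, k` and `l` an
inverse of `k` modulo `m`, the set
`G_{m,k}(g,y) = {x ∈ F ∣ xᵐ = y and ∏_{j=0}^{m-1} x^{-⟨j/k⟩}.g = 1}`,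
where `⟨j/k⟩ = (j·l) % m` and the product is taken in order `j = 0,…,m-1`.
Note that for `k = 1` one may take `l = 1`. -/
def GmkSet {F G : Type*} [Group F] [Group G] [MulDistribMulAction F G]
    (m l : ℕ) (g : G) (y : F) : Set F :=
  {x | x ^ m = y ∧
    ((List.range m).map fun j => (x⁻¹ ^ ((j * l) % m)) • g).prod = 1}

private lemma pow_congr_mod {F : Type*} [Group F] {x : F} {m : ℕ} (h : x ^ m = 1)
    {a b : ℕ} (hab : a ≡ b [MOD m]) : x ^ a = x ^ b := by
  rw [pow_eq_pow_mod a h, pow_eq_pow_mod b h, hab]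

/-- `z_{m,k}(1,y) = z_{m,1}(1,y)` and `z_{m,k}(g,1) = z_{m,1}(g,1)`; in the second case
`x ↦ xᵏ` and `x ↦ xˡ` are mutually inverse bijections between `G_{m,1}(g,1)` and
`G_{m,k}(g,1)`. -/
theorem zmk_one_cases
    {F G : Type*} [Group F] [Group G] [Finite F] [Finite G]
    [MulDistribMulAction F G]
    (m k l : ℕ) (hm : 0 < m) (hk : Nat.Coprime m k)
    (hl : k * l ≡ 1 [MOD m]) (g : G) (y : F) :
    (GmkSet (F := F) (G := G) m l (1 : G) y).ncard
        = (GmkSet (F := F) (G := G) m 1 (1 : G) y).ncard ∧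
    (GmkSet (F := F) (G := G) m l g (1 : F)).ncard
        = (GmkSet (F := F) (G := G) m 1 g (1 : F)).ncard ∧
    Set.BijOn (fun x : F => x ^ k)
      (GmkSet m 1 g (1 : F)) (GmkSet m l g (1 : F)) ∧
    Set.BijOn (fun x : F => x ^ l)
      (GmkSet m l g (1 : F)) (GmkSet m 1 g (1 : F)) ∧
    (∀ x ∈ GmkSet (F := F) (G := G) m 1 g (1 : F), (x ^ k) ^ l = x) ∧
    (∀ x ∈ GmkSet (F := F) (G := G) m l g (1 : F), (x ^ l) ^ k = x) := by
  have hinv : ∀ x : F, x ^ m = 1 → x⁻¹ ^ m = 1 := by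
    intro x hx; rw [inv_pow, hx, inv_one]
  -- first part: for g = 1 the sets agree
  have h1 : ∀ l' : ℕ, GmkSet (F := F) (G := G) m l' (1 : G) y = {x | x ^ m = y} := by
    intro l'; ext x; simp [GmkSet]
  -- mutual inverses
  have inv1 : ∀ x ∈ GmkSet (F := F) (G := G) m 1 g (1 : F), (x ^ k) ^ l = x := by
    rintro x ⟨hx1, -⟩
    rw [← pow_mul, pow_congr_mod hx1 hl, pow_one]
  have inv2 : ∀ x ∈ GmkSet (F := F) (G := G) m l g (1 : F), (x ^ l) ^ k = x := by
    rintro x ⟨hx1, -⟩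
    rw [← pow_mul, pow_congr_mod hx1 ((Nat.mul_comm l k) ▸ hl), pow_one]
  -- maps to
  have map1 : Set.MapsTo (fun x : F => x ^ k)
      (GmkSet m 1 g (1 : F)) (GmkSet m l g (1 : F)) := by
    rintro x ⟨hx1, hx2⟩
    have hp : (x ^ k) ^ m = 1 := by rw [pow_right_comm, hx1, one_pow]
    refine ⟨hp, ?_⟩
    have hterm : ∀ j ∈ List.range m,
        ((x ^ k)⁻¹ ^ ((j * l) % m)) • g = (x⁻¹ ^ ((j * 1) % m)) • g := by
      intro j hj
      congr 1
      rw [← inv_pow, ← pow_mul]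
      refine pow_congr_mod (hinv x hx1) ?_
      calc k * (j * l % m) ≡ k * (j * l) [MOD m] := (Nat.mod_modEq _ m).mul_left k
        _ = k * l * j := by ring
        _ ≡ 1 * j [MOD m] := hl.mul_right j
        _ = j * 1 := by ring
        _ ≡ j * 1 % m [MOD m] := (Nat.mod_modEq _ m).symm
    rw [List.map_congr_left hterm, hx2]
  have map2 : Set.MapsTo (fun x : F => x ^ l)
      (GmkSet m l g (1 : F)) (GmkSet m 1 g (1 : F)) := by
    rintro x ⟨hx1, hx2⟩
    have hp : (x ^ l) ^ m = 1 := by rw [pow_right_comm, hx1, one_pow]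
    refine ⟨hp, ?_⟩
    have hterm : ∀ j ∈ List.range m,
        ((x ^ l)⁻¹ ^ ((j * 1) % m)) • g = (x⁻¹ ^ ((j * l) % m)) • g := by
      intro j hj
      congr 1
      rw [← inv_pow, ← pow_mul]
      refine pow_congr_mod (hinv x hx1) ?_
      calc l * (j * 1 % m) ≡ l * (j * 1) [MOD m] := (Nat.mod_modEq _ m).mul_left l
        _ = j * l := by ring
        _ ≡ j * l % m [MOD m] := (Nat.mod_modEq _ m).symm
    rw [List.map_congr_left hterm, hx2]
  have hInv : Set.InvOn (fun x : F => x ^ l) (fun x : F => x ^ k)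
      (GmkSet m 1 g (1 : F)) (GmkSet m l g (1 : F)) := ⟨inv1, inv2⟩
  have bij1 := hInv.bijOn map1 map2
  have bij2 := hInv.symm.bijOn map2 map1
  refine ⟨by rw [h1 l, h1 1], ?_, bij1, bij2, inv1, inv2⟩
  rw [← bij2.image_eq, Set.ncard_image_of_injOn bij2.injOn]
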